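/- Every language recognized by a generalized unique hard attention Transformer (GUHAT) is in AC⁰: for every GUHAT T over alphabet Σ with s = ⌈log₂(|Σ|+2)⌉ and any binary symbol encoding h of Σ ∪ {$}, there is a family of Boolean circuits {C_m} of constant depth and polynomial size such that for all n and all x ∈ Σ^{n−1}, C_{sn}(h(x$)) = 1 iff x ∈ L(T). -/

import Mathlib

/-- Kinds of gates in a Boolean circuit. -/
inductive GateKind | const0 | const1 | not | and | or
  deriving DecidableEq

/-- A Boolean circuit with `n` inputs and `m` outputs: a directed acyclic graph whose
vertices are the `n` inputs together with `g` gates (listed in topological order), each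
gate labeled by a kind and receiving wires from inputs and earlier gates; NOT gates have
fan-in 1, constant gates fan-in 0, AND/OR gates unbounded fan-in. `m` (not necessarily
distinct) vertices are designated as outputs. -/
structure Circuit (n m : ℕ) where
  g : ℕ
  kind : Fin g → GateKind
  preds : Fin g → List (Fin n ⊕ Fin g)
  wf : ∀ i j : Fin g, Sum.inr j ∈ preds i → j < i
  faninNot : ∀ i, kind i = .not → (preds i).length = 1
  faninConst0 : ∀ i, kind i = .const0 → preds i = []
  faninConst1 : ∀ i, kind i = .const1 → preds i = []
  out : Fin m → (Fin n ⊕ Fin g)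

namespace Circuit

/-- The Boolean operation computed by a gate from the values on its input wires. -/
def gateOp (k : GateKind) (vs : List Bool) : Bool :=
  match k with
  | .const0 => false
  | .const1 => true
  | .not => !(vs.headD false)
  | .and => vs.all id
  | .or => vs.any id

/-- `v` is the (unique) assignment of Boolean values to the vertices of `C` consistent
with the input assignment `x` and the gate semantics. -/
def Consistent {n m : ℕ} (C : Circuit n m) (x : Fin n → Bool) (v : (Fin n ⊕ Fin C.g) → Bool) :
    Prop :=
  (∀ j, v (Sum.inl j) = x j) ∧
  (∀ i : Fin C.g, v (Sum.inr i) = gateOp (C.kind i) ((C.preds i).map v))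

/-- The size of a circuit: its total number of wires. -/
def size {n m : ℕ} (C : Circuit n m) : ℕ := ∑ i : Fin C.g, (C.preds i).length

/-- The depth of `C` (the maximum length of a directed path of wires from an input to an
output) is at most `K`: witnessed by a level function increasing along every wire,
zero on inputs, and at most `K` on outputs. -/
def DepthLE {n m : ℕ} (C : Circuit n m) (K : ℕ) : Prop :=
  ∃ lev : (Fin n ⊕ Fin C.g) → ℕ,
    (∀ j, lev (Sum.inl j) = 0) ∧
    (∀ i : Fin C.g, ∀ p ∈ C.preds i, lev p < lev (Sum.inr i)) ∧
    (∀ o, lev (C.out o) ≤ K)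

/-- `C` computes the Boolean function `f : {0,1}ⁿ → {0,1}^m`. -/
def Computes {n m : ℕ} (C : Circuit n m) (f : (Fin n → Bool) → (Fin m → Bool)) : Prop :=
  ∀ x v, C.Consistent x v → ∀ o, v (C.out o) = f x o

end Circuit

open Classical in
/-- The leftmost position maximizing the attention scores `a` (unique hard attention). -/
noncomputable def leftmostArgmax {n : ℕ} (hn : 0 < n) (a : Fin n → ℝ) : Fin n :=
  have : Nonempty (Fin n) := ⟨⟨0, hn⟩⟩
  (Finset.univ.filter (fun j => ∀ l, a l ≤ a j)).min'
    (by
      obtain ⟨j, hj⟩ := Finite.exists_max a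
      exact ⟨j, Finset.mem_filter.mpr ⟨Finset.mem_univ _, hj⟩⟩)

/-- A generalized (unique hard attention) Transformer over alphabet `σ`, with `K` layers
and `H` heads: arbitrary activation values `A`, an input function `f` (taking the symbol,
which may be the end-of-sequence marker `$ = Sum.inr ()`, the position, and the input
length), real-valued attention functions for each layer `k ∈ [1..K]` and head
`h ∈ [1..H]`, activation functions for each layer, and a `{0,1}`-valued output
function `g`. -/
structure GT (σ : Type) where
  K : ℕ
  H : ℕ
  A : Type
  f : (σ ⊕ Unit) → ℕ → ℕ → A
  fatt : ℕ → ℕ → A → A → ℝ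
  fact : ℕ → A → (Fin H → A) → A
  g : A → Bool

namespace GT

variable {σ : Type}

/-- The input sequence of symbols for input string `x`, with `$` appended. -/
def inputSeq (x : List σ) : Fin (x.length + 1) → (σ ⊕ Unit) := fun i =>
  if h : (i : ℕ) < x.length then Sum.inl (x.get ⟨i, h⟩) else Sum.inr ()

/-- Initial (layer-0) activation values `y⁰ᵢ = f(xᵢ, i, n)` (positions are `1`-based). -/
def y0 (T : GT σ) (x : List σ) : Fin (x.length + 1) → T.A := fun i =>
  T.f (inputSeq x i) ((i : ℕ) + 1) (x.length + 1)

/-- One layer of unique-hard-attention computation: each position attends, for each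
head, to the leftmost position maximizing the attention score, and applies the
activation function. Layers are numbered `1, …, K`. -/
noncomputable def layer (T : GT σ) {n : ℕ} (hn : 0 < n) (k : ℕ) (y : Fin n → T.A) :
    Fin n → T.A := fun i =>
  T.fact k (y i)
    (fun _h => y (leftmostArgmax hn (fun j => T.fatt k (_h : Fin T.H).val.succ (y i) (y j))))

/-- The activation values at layer `k` (layer `0` being the initial activations). -/
noncomputable def acts (T : GT σ) {n : ℕ} (hn : 0 < n) (y₀ : Fin n → T.A) :
    ℕ → Fin n → T.A
  | 0 => y₀
  | k + 1 => T.layer hn (k + 1) (T.acts hn y₀ k)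

/-- `T` accepts `x` iff the output function applied to the final-layer activation at the
last position of `x$` equals `1`. -/
noncomputable def accepts (T : GT σ) (x : List σ) : Prop :=
  T.g (T.acts (Nat.succ_pos _) (T.y0 x) T.K ⟨x.length, Nat.lt_succ_self _⟩) = true

/-- The language recognized by `T`: `L(T) = {x ∈ σ* : T accepts x$}`. -/
def lang (T : GT σ) : Set (List σ) := {x | T.accepts x}

end GT

/-- The bit string encoding the input `x$` under a binary symbol encoding `h` with
`s` bits per symbol: bit `r` is bit `r mod s` of the encoding of the symbol in
position `r / s`. -/
def encodeInput {σ : Type} {s : ℕ} (hs : 0 < s) (h : (σ ⊕ Unit) → Fin s → Bool)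
    (x : List σ) : Fin (s * (x.length + 1)) → Bool := fun r =>
  h (GT.inputSeq x ⟨(r : ℕ) / s, Nat.div_lt_of_lt_mul r.isLt⟩)
    ⟨(r : ℕ) % s, Nat.mod_lt _ hs⟩

namespace BFC

theorem attach_map' {α β : Type*} (l : List α) (f : α → β) :
    l.attach.map (fun p => f p.1) = l.map f := by
  rw [show (fun p : {x // x ∈ l} => f p.1) = f ∘ Subtype.val from rfl, ← List.map_map,
    List.attach_map_subtype_val]

/-- Boolean formulas with unbounded fan-in. -/
inductive BF (n : ℕ) where
  | lit (i : Fin n) (b : Bool)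
  | const (b : Bool)
  | and (l : List (BF n))
  | or (l : List (BF n))

namespace BF

variable {n : ℕ}

def eval (x : Fin n → Bool) : BF n → Bool
  | lit i b => x i == b
  | const b => b
  | and l => (l.attach.map (fun φ => eval x φ.1)).all id
  | or l => (l.attach.map (fun φ => eval x φ.1)).any id
decreasing_by
  all_goals (simp_wf; have := List.sizeOf_lt_of_mem φ.2; omega)

def depth : BF n → ℕ
  | lit _ _ => 1
  | const _ => 1
  | and l => (l.attach.map (fun φ => depth φ.1)).foldr max 0 + 1
  | or l => (l.attach.map (fun φ => depth φ.1)).foldr max 0 + 1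
decreasing_by
  all_goals (simp_wf; have := List.sizeOf_lt_of_mem φ.2; omega)

def wires : BF n → ℕ
  | lit _ b => if b then 0 else 1
  | const _ => 0
  | and l => l.length + (l.attach.map (fun φ => wires φ.1)).sum
  | or l => l.length + (l.attach.map (fun φ => wires φ.1)).sum
decreasing_by
  all_goals (simp_wf; have := List.sizeOf_lt_of_mem φ.2; omega)


theorem eval_lit (x : Fin n → Bool) (i : Fin n) (b : Bool) :
    eval x (lit i b) = (x i == b) := by rw [eval]

theorem eval_const (x : Fin n → Bool) (b : Bool) :
    eval x (const b) = b := by rw [eval]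

theorem eval_and (x : Fin n → Bool) (l : List (BF n)) :
    eval x (and l) = l.all (eval x) := by
  rw [eval, attach_map']
  induction l with
  | nil => rfl
  | cons a l ih => simp_all

theorem eval_or (x : Fin n → Bool) (l : List (BF n)) :
    eval x (or l) = l.any (eval x) := by
  rw [eval, attach_map']
  induction l with
  | nil => rfl
  | cons a l ih => simp_all

theorem depth_and_le (l : List (BF n)) (D : ℕ) (h : ∀ φ ∈ l, depth φ ≤ D) :
    depth (and l) ≤ D + 1 := by
  rw [depth, attach_map']
  have : (l.map depth).foldr max 0 ≤ D := by
    induction l with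
    | nil => simp
    | cons a l ih =>
      simp only [List.map_cons, List.foldr_cons]
      exact max_le (h a (by simp)) (ih (fun φ hφ => h φ (by simp [hφ])))
  omega

theorem depth_or_le (l : List (BF n)) (D : ℕ) (h : ∀ φ ∈ l, depth φ ≤ D) :
    depth (or l) ≤ D + 1 := by
  rw [depth, attach_map']
  have : (l.map depth).foldr max 0 ≤ D := by
    induction l with
    | nil => simp
    | cons a l ih =>
      simp only [List.map_cons, List.foldr_cons]
      exact max_le (h a (by simp)) (ih (fun φ hφ => h φ (by simp [hφ])))
  omega

theorem sum_map_le (l : List (BF n)) (W : ℕ) (h : ∀ φ ∈ l, wires φ ≤ W) :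
    (l.map wires).sum ≤ l.length * W := by
  induction l with
  | nil => simp
  | cons a l ih =>
    simp only [List.map_cons, List.sum_cons, List.length_cons]
    have h1 := h a (by simp)
    have h2 := ih (fun φ hφ => h φ (by simp [hφ]))
    nlinarith

theorem wires_and_le (l : List (BF n)) (W : ℕ) (h : ∀ φ ∈ l, wires φ ≤ W) :
    wires (and l) ≤ l.length * (W + 1) := by
  rw [wires, attach_map']
  have := sum_map_le l W h
  nlinarith [l.length.zero_le]

theorem wires_or_le (l : List (BF n)) (W : ℕ) (h : ∀ φ ∈ l, wires φ ≤ W) :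
    wires (or l) ≤ l.length * (W + 1) := by
  rw [wires, attach_map']
  have := sum_map_le l W h
  nlinarith [l.length.zero_le]

end BF
end BFC

namespace BFC

variable {n : ℕ}

abbrev Ref (n : ℕ) := Fin n ⊕ ℕ
abbrev Node (n : ℕ) := GateKind × List (Ref n)

def RefLt (m : ℕ) : Ref n → Prop
  | .inl _ => True
  | .inr j => j < m

theorem RefLt.mono {m m' : ℕ} {r : Ref n} (h : RefLt m r) (hm : m ≤ m') : RefLt m' r := by
  cases r with
  | inl a => trivial
  | inr j => exact lt_of_lt_of_le h hm

section Generic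

variable {V : Type*}

/-- Generic forward evaluation of a netlist. -/
def runAux (f : List V → Node n → V) (acc : List V) : List (Node n) → List V
  | [] => acc
  | nd :: L => runAux f (acc ++ [f acc nd]) L

theorem runAux_append (f : List V → Node n → V) (acc : List V) (L1 L2 : List (Node n)) :
    runAux f acc (L1 ++ L2) = runAux f (runAux f acc L1) L2 := by
  induction L1 generalizing acc with
  | nil => rfl
  | cons nd L ih => simp [runAux, ih]

theorem runAux_length (f : List V → Node n → V) (acc : List V) (L : List (Node n)) :
    (runAux f acc L).length = acc.length + L.length := by
  induction L generalizing acc with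
  | nil => simp [runAux]
  | cons nd L ih => simp [runAux, ih]; omega

theorem runAux_prefix (f : List V → Node n → V) (acc : List V) (L : List (Node n)) :
    ∃ t, runAux f acc L = acc ++ t := by
  induction L generalizing acc with
  | nil => exact ⟨[], by simp [runAux]⟩
  | cons nd L ih =>
    obtain ⟨t, ht⟩ := ih (acc ++ [f acc nd])
    exact ⟨[f acc nd] ++ t, by simp only [runAux, ht, List.append_assoc]⟩

theorem runAux_getD_stable (f : List V → Node n → V) (d : V) (acc : List V)
    (L : List (Node n)) {j : ℕ} (hj : j < acc.length) :
    (runAux f acc L).getD j d = acc.getD j d := by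
  obtain ⟨t, ht⟩ := runAux_prefix f acc L
  rw [ht]
  rw [List.getD_eq_getElem?_getD, List.getD_eq_getElem?_getD,
    List.getElem?_append_left hj]

theorem runAux_getD (f : List V → Node n → V) (d : V) (acc : List V) (L : List (Node n))
    (i : ℕ) (hi : i < L.length) :
    (runAux f acc L).getD (acc.length + i) d
      = f (runAux f acc (L.take i)) (L.get ⟨i, hi⟩) := by
  induction L generalizing acc i with
  | nil => simp at hi
  | cons nd L ih =>
    cases i with
    | zero =>
      show (runAux f (acc ++ [f acc nd]) L).getD (acc.length + 0) d = f (runAux f acc []) nd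
      rw [runAux_getD_stable f d _ L (by simp)]
      simp [runAux]
    | succ i =>
      have hi' : i < L.length := by simpa using hi
      have := ih (acc ++ [f acc nd]) i hi'
      show (runAux f (acc ++ [f acc nd]) L).getD (acc.length + (i+1)) d
        = f (runAux f acc (nd :: L.take i)) (L.get ⟨i, hi'⟩)
      rw [show acc.length + (i+1) = (acc ++ [f acc nd]).length + i by simp; omega] at *
      rw [this]
      rfl

/-- Reference lookup. -/
def refV (g : Fin n → V) (d : V) (vals : List V) : Ref n → V
  | .inl a => g a
  | .inr j => vals.getD j d

theorem refV_stable (g : Fin n → V) (d : V) (f : List V → Node n → V) (acc : List V)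
    (L : List (Node n)) {r : Ref n} (hr : RefLt acc.length r) :
    refV g d (runAux f acc L) r = refV g d acc r := by
  cases r with
  | inl a => rfl
  | inr j => exact runAux_getD_stable f d acc L hr

end Generic

def nodeVal (x : Fin n → Bool) (acc : List Bool) (nd : Node n) : Bool :=
  Circuit.gateOp nd.1 (nd.2.map (refV x false acc))

def nodeLev (acc : List ℕ) (nd : Node n) : ℕ :=
  (nd.2.map (refV (fun _ : Fin n => 0) 0 acc)).foldr max 0 + 1

def NWF (off : ℕ) (L : List (Node n)) : Prop :=
  ∀ i (hi : i < L.length), ∀ r ∈ (L.get ⟨i, hi⟩).2, RefLt (off + i) r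

def Fanin (L : List (Node n)) : Prop :=
  ∀ nd ∈ L, (nd.1 = .not → nd.2.length = 1) ∧ (nd.1 = .const0 → nd.2 = [])
    ∧ (nd.1 = .const1 → nd.2 = [])

theorem NWF.append {off : ℕ} {L1 L2 : List (Node n)} (h1 : NWF off L1)
    (h2 : NWF (off + L1.length) L2) : NWF off (L1 ++ L2) := by
  intro i hi r hr
  rcases lt_or_ge i L1.length with h | h
  · have : (L1 ++ L2).get ⟨i, hi⟩ = L1.get ⟨i, h⟩ := by
      simp [List.getElem_append_left h]
    rw [this] at hr
    exact h1 i h r hr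
  · have hi2 : i - L1.length < L2.length := by
      have := hi; simp at this; omega
    have : (L1 ++ L2).get ⟨i, hi⟩ = L2.get ⟨i - L1.length, hi2⟩ := by
      simp [List.getElem_append_right h]
    rw [this] at hr
    have := h2 _ hi2 r hr
    exact this.mono (by omega)

theorem Fanin.append {L1 L2 : List (Node n)} (h1 : Fanin L1) (h2 : Fanin L2) :
    Fanin (L1 ++ L2) := by
  intro nd hnd
  rcases List.mem_append.mp hnd with h | h
  · exact h1 nd h
  · exact h2 nd h

def Lwires (L : List (Node n)) : ℕ := (L.map (fun nd => nd.2.length)).sum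

theorem Lwires.append (L1 L2 : List (Node n)) : Lwires (L1 ++ L2) = Lwires L1 + Lwires L2 := by
  simp [Lwires]

mutual

def comp (off : ℕ) : BF n → List (Node n) × Ref n
  | .lit i true => ([], .inl i)
  | .lit i false => ([(.not, [.inl i])], .inr off)
  | .const true => ([(.const1, [])], .inr off)
  | .const false => ([(.const0, [])], .inr off)
  | .and l =>
    let p := compList off l
    (p.1 ++ [(.and, p.2)], .inr (off + p.1.length))
  | .or l =>
    let p := compList off l
    (p.1 ++ [(.or, p.2)], .inr (off + p.1.length))

def compList (off : ℕ) : List (BF n) → List (Node n) × List (Ref n)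
  | [] => ([], [])
  | φ :: l =>
    let p := comp off φ
    let q := compList (off + p.1.length) l
    (p.1 ++ q.1, p.2 :: q.2)

end

end BFC

namespace BFC

variable {n : ℕ}

theorem all_map_id {α : Type*} (l : List α) (f : α → Bool) : (l.map f).all id = l.all f := by
  induction l with
  | nil => rfl
  | cons a l ih => simp_all

theorem any_map_id {α : Type*} (l : List α) (f : α → Bool) : (l.map f).any id = l.any f := by
  induction l with
  | nil => rfl
  | cons a l ih => simp_all

theorem foldr_max_le {l : List ℕ} {D : ℕ} (h : ∀ a ∈ l, a ≤ D) : l.foldr max 0 ≤ D := by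
  induction l with
  | nil => simp
  | cons a l ih => exact max_le (h a (by simp)) (ih fun b hb => h b (by simp [hb]))

theorem le_foldr_max {l : List ℕ} {a : ℕ} (h : a ∈ l) : a ≤ l.foldr max 0 := by
  induction l with
  | nil => simp at h
  | cons b l ih =>
    rcases List.mem_cons.mp h with rfl | h
    · exact le_max_left _ _
    · exact le_trans (ih h) (le_max_right _ _)

theorem getD_append_self' {V : Type*} (A : List V) (v : V) (d : V) :
    (A ++ [v]).getD A.length d = v := by
  rw [List.getD_eq_getElem?_getD, List.getElem?_append_right (le_refl _)]
  simp

mutual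

theorem comp_spec (x : Fin n → Bool) (off : ℕ) (φ : BF n) :
    NWF off (comp off φ).1 ∧ Fanin (comp off φ).1 ∧
    RefLt (off + (comp off φ).1.length) (comp off φ).2 ∧
    ∀ acc : List Bool, acc.length = off →
      refV x false (runAux (nodeVal x) acc (comp off φ).1) (comp off φ).2 = BF.eval x φ := by
  match φ with
  | .lit i true =>
    refine ⟨?_, ?_, trivial, ?_⟩
    · intro j hj; simp [comp] at hj
    · intro nd hnd; simp [comp] at hnd
    · intro acc hacc
      simp [comp, runAux, refV, BF.eval]
  | .lit i false =>
    refine ⟨?_, ?_, ?_, ?_⟩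
    · intro j hj r hr
      simp [comp] at hj
      subst hj
      simp [comp] at hr
      subst hr
      trivial
    · intro nd hnd
      simp [comp] at hnd
      subst hnd
      refine ⟨fun _ => rfl, fun h => by simp at h, fun h => by simp at h⟩
    · show RefLt (off + 1) (Sum.inr off); exact Nat.lt_succ_self off
    · intro acc hacc
      show refV x false (runAux (nodeVal x) acc [(.not, [.inl i])]) (.inr off) = _
      simp only [runAux, refV]
      rw [← hacc, getD_append_self' acc _ _]
      cases hxi : x i <;> simp [nodeVal, Circuit.gateOp, refV, BF.eval, hxi]
  | .const b =>
    cases b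
    · refine ⟨?_, ?_, ?_, ?_⟩
      · intro j hj r hr
        simp [comp] at hj
        subst hj
        simp [comp] at hr
      · intro nd hnd
        simp [comp] at hnd
        subst hnd
        exact ⟨fun h => by simp at h, fun _ => rfl, fun h => by simp at h⟩
      · show RefLt (off + 1) (Sum.inr off); exact Nat.lt_succ_self off
      · intro acc hacc
        show refV x false (runAux (nodeVal x) acc [(.const0, [])]) (.inr off) = _
        simp only [runAux, refV]
        rw [← hacc, getD_append_self' acc _ _]
        simp [nodeVal, Circuit.gateOp, BF.eval]
    · refine ⟨?_, ?_, ?_, ?_⟩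
      · intro j hj r hr
        simp [comp] at hj
        subst hj
        simp [comp] at hr
      · intro nd hnd
        simp [comp] at hnd
        subst hnd
        exact ⟨fun h => by simp at h, fun h => by simp at h, fun _ => rfl⟩
      · show RefLt (off + 1) (Sum.inr off); exact Nat.lt_succ_self off
      · intro acc hacc
        show refV x false (runAux (nodeVal x) acc [(.const1, [])]) (.inr off) = _
        simp only [runAux, refV]
        rw [← hacc, getD_append_self' acc _ _]
        simp [nodeVal, Circuit.gateOp, BF.eval]
  | .and l =>
    obtain ⟨hN, hF, hlen, hrefs, hev⟩ := compList_spec x off l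
    refine ⟨?_, ?_, ?_, ?_⟩
    · show NWF off ((compList off l).1 ++ [(.and, (compList off l).2)])
      refine hN.append ?_
      intro j hj r hr
      have hj0 : j = 0 := by simp at hj; omega
      subst hj0
      simp at hr
      exact (hrefs r hr).mono (by omega)
    · refine hF.append ?_
      intro nd hnd
      simp at hnd
      subst hnd
      exact ⟨fun h => by simp at h, fun h => by simp at h, fun h => by simp at h⟩
    · show RefLt (off + ((compList off l).1 ++ _).length) (Sum.inr (off + (compList off l).1.length))
      simp [RefLt]
    · intro acc hacc
      show refV x false (runAux (nodeVal x) acc ((compList off l).1 ++ [(.and, (compList off l).2)]))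
        (.inr (off + (compList off l).1.length)) = _
      rw [runAux_append]
      set A := runAux (nodeVal x) acc (compList off l).1 with hA
      have hAlen : A.length = off + (compList off l).1.length := by
        rw [hA, runAux_length, hacc]
      simp only [runAux, refV]
      rw [← hAlen, getD_append_self' A _ _]
      rw [show nodeVal x A (.and, (compList off l).2)
        = Circuit.gateOp .and ((compList off l).2.map (refV x false A)) from rfl]
      rw [hev acc hacc]
      simp only [Circuit.gateOp, BF.eval_and, all_map_id]
  | .or l =>
    obtain ⟨hN, hF, hlen, hrefs, hev⟩ := compList_spec x off l
    refine ⟨?_, ?_, ?_, ?_⟩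
    · show NWF off ((compList off l).1 ++ [(.or, (compList off l).2)])
      refine hN.append ?_
      intro j hj r hr
      have hj0 : j = 0 := by simp at hj; omega
      subst hj0
      simp at hr
      exact (hrefs r hr).mono (by omega)
    · refine hF.append ?_
      intro nd hnd
      simp at hnd
      subst hnd
      exact ⟨fun h => by simp at h, fun h => by simp at h, fun h => by simp at h⟩
    · show RefLt (off + ((compList off l).1 ++ _).length) (Sum.inr (off + (compList off l).1.length))
      simp [RefLt]
    · intro acc hacc
      show refV x false (runAux (nodeVal x) acc ((compList off l).1 ++ [(.or, (compList off l).2)]))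
        (.inr (off + (compList off l).1.length)) = _
      rw [runAux_append]
      set A := runAux (nodeVal x) acc (compList off l).1 with hA
      have hAlen : A.length = off + (compList off l).1.length := by
        rw [hA, runAux_length, hacc]
      simp only [runAux, refV]
      rw [← hAlen, getD_append_self' A _ _]
      rw [show nodeVal x A (.or, (compList off l).2)
        = Circuit.gateOp .or ((compList off l).2.map (refV x false A)) from rfl]
      rw [hev acc hacc]
      simp only [Circuit.gateOp, BF.eval_or, any_map_id]

theorem compList_spec (x : Fin n → Bool) (off : ℕ) (l : List (BF n)) :
    NWF off (compList off l).1 ∧ Fanin (compList off l).1 ∧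
    (compList off l).2.length = l.length ∧
    (∀ r ∈ (compList off l).2, RefLt (off + (compList off l).1.length) r) ∧
    ∀ acc : List Bool, acc.length = off →
      (compList off l).2.map (refV x false (runAux (nodeVal x) acc (compList off l).1))
        = l.map (BF.eval x) := by
  match l with
  | [] =>
    refine ⟨?_, ?_, rfl, ?_, ?_⟩
    · intro j hj; simp [compList] at hj
    · intro nd hnd; simp [compList] at hnd
    · intro r hr; simp [compList] at hr
    · intro acc hacc; rfl
  | φ :: l =>
    obtain ⟨hN1, hF1, hr1, hev1⟩ := comp_spec x off φ
    obtain ⟨hN2, hF2, hlen2, hrefs2, hev2⟩ :=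
      compList_spec x (off + (comp off φ).1.length) l
    have hpair : compList off (φ :: l)
        = ((comp off φ).1 ++ (compList (off + (comp off φ).1.length) l).1,
           (comp off φ).2 :: (compList (off + (comp off φ).1.length) l).2) := rfl
    rw [hpair]
    refine ⟨hN1.append hN2, hF1.append hF2, by simp [hlen2], ?_, ?_⟩
    · intro r hr
      rcases List.mem_cons.mp hr with rfl | hr
      · exact hr1.mono (by simp only [List.length_append]; omega)
      · exact (hrefs2 r hr).mono (by simp only [List.length_append]; omega)
    · intro acc hacc
      rw [runAux_append]
      set A := runAux (nodeVal x) acc (comp off φ).1 with hA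
      have hAlen : A.length = off + (comp off φ).1.length := by
        rw [hA, runAux_length, hacc]
      simp only [List.map_cons]
      rw [refV_stable x false (nodeVal x) A _ (by rw [hAlen]; exact hr1), hev1 acc hacc,
        hev2 A hAlen]

end

end BFC

namespace BFC

variable {n : ℕ}

mutual

theorem comp_lev (off : ℕ) (φ : BF n) :
    ∀ lacc : List ℕ, lacc.length = off →
      refV (fun _ : Fin n => 0) 0 (runAux nodeLev lacc (comp off φ).1) (comp off φ).2
        ≤ BF.depth φ := by
  match φ with
  | .lit i true => intro lacc hacc; simp [comp, runAux, refV, BF.depth]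
  | .lit i false =>
    intro lacc hacc
    show refV _ 0 (runAux nodeLev lacc [(.not, [.inl i])]) (.inr off) ≤ _
    simp only [runAux, refV]
    rw [← hacc, getD_append_self' lacc _ _]
    simp [nodeLev, refV, BF.depth]
  | .const b =>
    cases b <;>
    · intro lacc hacc
      simp only [comp, runAux, refV]
      rw [← hacc, getD_append_self' lacc _ _]
      simp [nodeLev, BF.depth]
  | .and l =>
    intro lacc hacc
    show refV _ 0 (runAux nodeLev lacc ((compList off l).1 ++ [(.and, (compList off l).2)]))
      (.inr (off + (compList off l).1.length)) ≤ _
    rw [runAux_append]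
    set A := runAux nodeLev lacc (compList off l).1 with hA
    have hAlen : A.length = off + (compList off l).1.length := by
      rw [hA, runAux_length, hacc]
    simp only [runAux, refV]
    rw [← hAlen, getD_append_self' A _ _]
    have hb := compList_lev off l lacc hacc
    rw [BF.depth, attach_map']
    have : ((compList off l).2.map (refV (fun _ : Fin n => 0) 0 A)).foldr max 0
        ≤ (l.map BF.depth).foldr max 0 := by
      refine foldr_max_le ?_
      intro a ha
      obtain ⟨r, hr, rfl⟩ := List.mem_map.mp ha
      exact hb r hr
    show nodeLev A (.and, (compList off l).2) ≤ _
    rw [nodeLev]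
    dsimp only
    omega
  | .or l =>
    intro lacc hacc
    show refV _ 0 (runAux nodeLev lacc ((compList off l).1 ++ [(.or, (compList off l).2)]))
      (.inr (off + (compList off l).1.length)) ≤ _
    rw [runAux_append]
    set A := runAux nodeLev lacc (compList off l).1 with hA
    have hAlen : A.length = off + (compList off l).1.length := by
      rw [hA, runAux_length, hacc]
    simp only [runAux, refV]
    rw [← hAlen, getD_append_self' A _ _]
    have hb := compList_lev off l lacc hacc
    rw [BF.depth, attach_map']
    have : ((compList off l).2.map (refV (fun _ : Fin n => 0) 0 A)).foldr max 0
        ≤ (l.map BF.depth).foldr max 0 := by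
      refine foldr_max_le ?_
      intro a ha
      obtain ⟨r, hr, rfl⟩ := List.mem_map.mp ha
      exact hb r hr
    show nodeLev A (.or, (compList off l).2) ≤ _
    rw [nodeLev]
    dsimp only
    omega

theorem compList_lev (off : ℕ) (l : List (BF n)) :
    ∀ lacc : List ℕ, lacc.length = off → ∀ r ∈ (compList off l).2,
      refV (fun _ : Fin n => 0) 0 (runAux nodeLev lacc (compList off l).1) r
        ≤ (l.map BF.depth).foldr max 0 := by
  match l with
  | [] => intro lacc hacc r hr; simp [compList] at hr
  | φ :: l =>
    intro lacc hacc r hr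
    have hpair : compList off (φ :: l)
        = ((comp off φ).1 ++ (compList (off + (comp off φ).1.length) l).1,
           (comp off φ).2 :: (compList (off + (comp off φ).1.length) l).2) := rfl
    rw [hpair] at hr ⊢
    rw [runAux_append]
    set A := runAux nodeLev lacc (comp off φ).1 with hA
    have hAlen : A.length = off + (comp off φ).1.length := by
      rw [hA, runAux_length, hacc]
    have hr1 := (comp_spec (fun _ => false) off φ).2.2.1
    rcases List.mem_cons.mp hr with rfl | hr
    · rw [refV_stable _ 0 nodeLev A _ (by rw [hAlen]; exact hr1)]
      have := comp_lev off φ lacc hacc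
      rw [← hA] at this
      refine le_trans this ?_
      simp only [List.map_cons, List.foldr_cons]
      exact le_max_left _ _
    · have := compList_lev (off + (comp off φ).1.length) l A hAlen r hr
      refine le_trans this ?_
      simp only [List.map_cons, List.foldr_cons]
      exact le_max_right _ _

end

mutual

theorem comp_size (off : ℕ) (φ : BF n) : Lwires (comp off φ).1 ≤ BF.wires φ := by
  match φ with
  | .lit i true => simp [comp, Lwires, BF.wires]
  | .lit i false => simp [comp, Lwires, BF.wires]
  | .const b => cases b <;> simp [comp, Lwires, BF.wires]
  | .and l =>
    have h1 := compList_size off l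
    have h2 := (compList_spec (fun _ => false) off l).2.2.1
    show Lwires ((compList off l).1 ++ [(.and, (compList off l).2)]) ≤ _
    rw [Lwires.append, BF.wires, attach_map']
    have : Lwires [((GateKind.and : GateKind), (compList off l).2)] = (compList off l).2.length := by
      simp [Lwires]
    rw [this, h2]
    omega
  | .or l =>
    have h1 := compList_size off l
    have h2 := (compList_spec (fun _ => false) off l).2.2.1
    show Lwires ((compList off l).1 ++ [(.or, (compList off l).2)]) ≤ _
    rw [Lwires.append, BF.wires, attach_map']
    have : Lwires [((GateKind.or : GateKind), (compList off l).2)] = (compList off l).2.length := by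
      simp [Lwires]
    rw [this, h2]
    omega

theorem compList_size (off : ℕ) (l : List (BF n)) :
    Lwires (compList off l).1 ≤ (l.map BF.wires).sum := by
  match l with
  | [] => simp [compList, Lwires]
  | φ :: l =>
    have h1 := comp_size off φ
    have h2 := compList_size (off + (comp off φ).1.length) l
    have hpair : (compList off (φ :: l)).1
        = (comp off φ).1 ++ (compList (off + (comp off φ).1.length) l).1 := rfl
    rw [hpair, Lwires.append]
    simp only [List.map_cons, List.sum_cons]
    omega

end

end BFC

namespace BFC

variable {n : ℕ}

def castRef {g : ℕ} : (r : Ref n) → RefLt g r → Fin n ⊕ Fin g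
  | .inl a, _ => .inl a
  | .inr j, h => .inr ⟨j, h⟩

theorem sum_fin_get {α : Type*} (L : List α) (f : α → ℕ) :
    ∑ i : Fin L.length, f (L.get i) = (L.map f).sum := by
  induction L with
  | nil => simp
  | cons a L ih =>
    rw [List.map_cons, List.sum_cons, ← ih]
    exact Fin.sum_univ_succ _

def toCircuit (φ : BF n) : Circuit n 1 where
  g := (comp 0 φ).1.length
  kind i := ((comp 0 φ).1.get i).1
  preds i := ((comp 0 φ).1.get i).2.pmap castRef
    (fun r hr => ((comp_spec (fun _ => false) 0 φ).1 i.1 i.2 r hr).mono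
      (by have := i.2; omega))
  wf := by
    intro i j hj
    obtain ⟨r, hr, heq⟩ := List.mem_pmap.mp hj
    cases r with
    | inl a => simp [castRef] at heq
    | inr j0 =>
      have hlt : j0 < 0 + i.1 := (comp_spec (fun _ => false) 0 φ).1 i.1 i.2 _ hr
      simp [castRef, Fin.ext_iff] at heq
      show j.1 < i.1
      omega
  faninNot := by
    intro i hk
    rw [List.length_pmap]
    exact (((comp_spec (fun _ => false) 0 φ).2.1 _ (List.get_mem _ ⟨i.1, i.isLt⟩)).1 hk)
  faninConst0 := by
    intro i hk
    have h0 := (((comp_spec (fun _ => false) 0 φ).2.1 _ (List.get_mem _ ⟨i.1, i.isLt⟩)).2.1 hk)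
    simp only [List.get_eq_getElem] at h0
    simp [h0]
  faninConst1 := by
    intro i hk
    have h0 := (((comp_spec (fun _ => false) 0 φ).2.1 _ (List.get_mem _ ⟨i.1, i.isLt⟩)).2.2 hk)
    simp only [List.get_eq_getElem] at h0
    simp [h0]
  out := fun _ => castRef (comp 0 φ).2
    ((comp_spec (fun _ => false) 0 φ).2.2.1.mono (by omega))

theorem castRef_val {g m : ℕ} (x : Fin n → Bool) (v : (Fin n ⊕ Fin g) → Bool)
    (vals : List Bool) (hv1 : ∀ a, v (Sum.inl a) = x a)
    (hvals : ∀ j (hj : j < g), j < m → v (Sum.inr ⟨j, hj⟩) = vals.getD j false)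
    (r : Ref n) (hg : RefLt g r) (hm : RefLt m r) :
    v (castRef r hg) = refV x false vals r := by
  cases r with
  | inl a => exact hv1 a
  | inr j => exact hvals j hg hm

theorem levf_castRef {g : ℕ} (lrun : List ℕ) (r : Ref n) (h : RefLt g r) :
    Sum.elim (fun _ : Fin n => 0) (fun i : Fin g => lrun.getD i.1 0) (castRef r h)
      = refV (fun _ : Fin n => 0) 0 lrun r := by
  cases r <;> rfl

theorem toCircuit_computes (φ : BF n) :
    (toCircuit φ).Computes (fun x _ => BF.eval x φ) := by
  intro x v hv o
  have hgg : (toCircuit φ).g = (comp 0 φ).1.length := rfl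
  have hsplit : ∀ i : ℕ, runAux (nodeVal x) [] (comp 0 φ).1
      = runAux (nodeVal x) (runAux (nodeVal x) [] ((comp 0 φ).1.take i))
        ((comp 0 φ).1.drop i) := by
    intro i; rw [← runAux_append, List.take_append_drop]
  have hstab : ∀ j i : ℕ, j < i → i ≤ (comp 0 φ).1.length →
      (runAux (nodeVal x) [] (comp 0 φ).1).getD j false
        = (runAux (nodeVal x) [] ((comp 0 φ).1.take i)).getD j false := by
    intro j i hji hi
    rw [hsplit i]
    refine runAux_getD_stable _ _ _ _ ?_
    rw [runAux_length]
    simp only [List.length_nil, List.length_take, Nat.zero_add]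
    omega
  have key : ∀ m : ℕ, ∀ i : Fin (toCircuit φ).g, i.1 = m →
      v (Sum.inr i) = (runAux (nodeVal x) [] (comp 0 φ).1).getD i.1 false := by
    intro m
    induction m using Nat.strong_induction_on with
    | _ m IH =>
      intro i him
      rw [hv.2 i]
      have hgd := runAux_getD (nodeVal x) false [] (comp 0 φ).1 i.1 i.2
      simp only [List.length_nil, Nat.zero_add] at hgd
      rw [hgd, nodeVal]
      show Circuit.gateOp _ _ = Circuit.gateOp _ _
      congr 1
      refine List.ext_getElem (by simp only [toCircuit]; exact ((List.length_map ..).trans List.length_pmap).trans (List.length_map ..).symm) ?_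
      intro t ht1 ht2
      simp only [toCircuit]
      refine (List.getElem_map ..).trans ?_
      refine (congrArg v (List.getElem_pmap ..)).trans ?_
      refine Eq.trans ?_ (List.getElem_map ..).symm
      have htlen : t < ((comp 0 φ).1.get ⟨i.1, i.2⟩).2.length := by
        simpa using ht2
      refine castRef_val (m := i.1) x v _ hv.1 ?_ _ _ ?_
      · intro j hj hji
        have := IH j (by omega) ⟨j, hj⟩ rfl
        rw [this]
        exact hstab j i.1 hji (le_of_lt i.2)
      · have := (comp_spec (fun _ => false) 0 φ).1 i.1 i.2 _
          (List.getElem_mem htlen)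
        rw [Nat.zero_add] at this
        exact this
  have hout : v ((toCircuit φ).out o)
      = refV x false (runAux (nodeVal x) [] (comp 0 φ).1) (comp 0 φ).2 :=
    castRef_val (m := (comp 0 φ).1.length) x v
      (runAux (nodeVal x) [] (comp 0 φ).1) hv.1
      (fun j hj _ => key j ⟨j, hj⟩ rfl) _
      ((comp_spec (fun _ => false) 0 φ).2.2.1.mono (by omega))
      ((comp_spec (fun _ => false) 0 φ).2.2.1.mono (by omega))
  rw [hout]
  exact (comp_spec x 0 φ).2.2.2 [] rfl

theorem toCircuit_depth (φ : BF n) : (toCircuit φ).DepthLE (BF.depth φ) := by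
  have hgg : (toCircuit φ).g = (comp 0 φ).1.length := rfl
  refine ⟨Sum.elim (fun _ => 0)
    (fun i : Fin (toCircuit φ).g => (runAux nodeLev [] (comp 0 φ).1).getD i.1 0),
    fun j => rfl, ?_, ?_⟩
  · intro i p hp
    obtain ⟨r, hr, heq⟩ := List.mem_pmap.mp hp
    subst heq
    refine (levf_castRef _ r _).trans_lt ?_
    have hgd := runAux_getD nodeLev 0 [] (comp 0 φ).1 i.1 i.2
    simp only [List.length_nil, Nat.zero_add] at hgd
    show refV _ 0 _ r < Sum.elim _ _ (Sum.inr i)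
    simp only [Sum.elim_inr]
    rw [hgd]
    have hri : RefLt i.1 r := by
      have := (comp_spec (fun _ => false) 0 φ).1 i.1 i.2 _ hr
      simpa using this
    have hstab : refV (fun _ : Fin n => 0) 0 (runAux nodeLev [] (comp 0 φ).1) r
        = refV (fun _ : Fin n => 0) 0 (runAux nodeLev [] ((comp 0 φ).1.take i.1)) r := by
      rw [show runAux nodeLev [] (comp 0 φ).1
        = runAux nodeLev (runAux nodeLev [] ((comp 0 φ).1.take i.1))
          ((comp 0 φ).1.drop i.1) by rw [← runAux_append, List.take_append_drop]]
      refine refV_stable _ _ _ _ _ ?_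
      rw [runAux_length]
      simp only [List.length_nil, List.length_take, Nat.zero_add]
      refine hri.mono ?_
      have h2 := i.2
      omega
    rw [hstab, nodeLev]
    exact Nat.lt_succ_of_le (le_foldr_max (List.mem_map_of_mem hr))
  · intro o
    show Sum.elim _ _ (castRef (comp 0 φ).2 _) ≤ _
    refine (levf_castRef _ _ _).trans_le ?_
    exact comp_lev 0 φ [] rfl

theorem toCircuit_size (φ : BF n) : (toCircuit φ).size ≤ BF.wires φ := by
  have : (toCircuit φ).size = Lwires (comp 0 φ).1 := by
    show (∑ i : Fin (comp 0 φ).1.length, _) = _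
    rw [Lwires, ← sum_fin_get]
    congr 1
    funext i
    simp [toCircuit, List.length_pmap]
  rw [this]
  exact comp_size 0 φ

end BFC

section Guhat

open BFC

/-! ### Leftmost argmax lemmas -/

theorem leftmostArgmax_mem {n : ℕ} (hn : 0 < n) (a : Fin n → ℝ) :
    ∀ l, a l ≤ a (leftmostArgmax hn a) := by
  classical
  have : Nonempty (Fin n) := ⟨⟨0, hn⟩⟩
  have hmem := Finset.min'_mem (Finset.univ.filter (fun j => ∀ l, a l ≤ a j))
    (by
      obtain ⟨j, hj⟩ := Finite.exists_max a
      exact ⟨j, Finset.mem_filter.mpr ⟨Finset.mem_univ _, hj⟩⟩)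
  have := (Finset.mem_filter.mp hmem).2
  exact this

theorem leftmostArgmax_lt {n : ℕ} (hn : 0 < n) (a : Fin n → ℝ) {j : Fin n}
    (hj : j < leftmostArgmax hn a) : a j < a (leftmostArgmax hn a) := by
  classical
  have : Nonempty (Fin n) := ⟨⟨0, hn⟩⟩
  by_contra hcon
  push_neg at hcon
  have hmax := leftmostArgmax_mem hn a
  have hjf : j ∈ Finset.univ.filter (fun j => ∀ l, a l ≤ a j) :=
    Finset.mem_filter.mpr ⟨Finset.mem_univ _, fun l => le_trans (hmax l) hcon⟩
  have := Finset.min'_le _ j hjf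
  exact absurd (lt_of_lt_of_le hj this) (lt_irrefl _)

theorem leftmostArgmax_eq {n : ℕ} (hn : 0 < n) (a : Fin n → ℝ) {b : Fin n}
    (h1 : ∀ l, a l ≤ a b) (h2 : ∀ j, j < b → a j < a b) :
    leftmostArgmax hn a = b := by
  classical
  have : Nonempty (Fin n) := ⟨⟨0, hn⟩⟩
  have hbf : b ∈ Finset.univ.filter (fun j => ∀ l, a l ≤ a j) :=
    Finset.mem_filter.mpr ⟨Finset.mem_univ _, h1⟩
  have hle : leftmostArgmax hn a ≤ b := Finset.min'_le _ b hbf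
  rcases lt_or_eq_of_le hle with hlt | heq
  · exact absurd (h2 _ hlt) (not_lt.mpr (leftmostArgmax_mem hn a _))
  · exact heq

/-! ### Description types -/

/-- Layer-`k` description trees: a candidate history of the computation of one
activation value. -/
def Dk (σ' : Type) (H n : ℕ) : ℕ → Type
  | 0 => Fin n × σ'
  | k+1 => Dk σ' H n k × (Fin H → Dk σ' H n k)

instance fintypeDk (σ' : Type) [Fintype σ'] (H n : ℕ) :
    ∀ k, Fintype (Dk σ' H n k)
  | 0 => inferInstanceAs (Fintype (Fin n × σ'))
  | k+1 =>
    letI := fintypeDk σ' H n k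
    inferInstanceAs (Fintype (Dk σ' H n k × (Fin H → Dk σ' H n k)))

def rootD {σ' : Type} {H n : ℕ} : ∀ k, Dk σ' H n k → Fin n
  | 0, d => d.1
  | k+1, d => rootD k d.1

variable {σ : Type}

/-- The value of a description. -/
def valD (T : GT σ) (n : ℕ) : ∀ k, Dk (σ ⊕ Unit) T.H n k → T.A
  | 0, d => T.f d.2 ((d.1 : ℕ) + 1) n
  | k+1, d => T.fact (k+1) (valD T n k d.1) (fun hh => valD T n k (d.2 hh))

/-- The actual description of the computation at layer `k`, position `i`. -/
noncomputable def descD (T : GT σ) (x : List σ) :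
    ∀ k, Fin (x.length + 1) → Dk (σ ⊕ Unit) T.H (x.length + 1) k
  | 0, i => (i, GT.inputSeq x i)
  | k+1, i =>
    (descD T x k i, fun hh => descD T x k
      (leftmostArgmax (Nat.succ_pos _) (fun j =>
        T.fatt (k+1) (hh : Fin T.H).val.succ
          (T.acts (Nat.succ_pos _) (T.y0 x) k i)
          (T.acts (Nat.succ_pos _) (T.y0 x) k j))))

theorem rootD_descD (T : GT σ) (x : List σ) :
    ∀ k i, rootD k (descD T x k i) = i
  | 0, i => rfl
  | k+1, i => rootD_descD T x k i

theorem valD_descD (T : GT σ) (x : List σ) :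
    ∀ k i, valD T (x.length + 1) k (descD T x k i)
      = T.acts (Nat.succ_pos _) (T.y0 x) k i
  | 0, i => rfl
  | k+1, i => by
    show T.fact (k+1) _ _ = T.acts _ _ (k+1) i
    rw [GT.acts]
    show _ = T.layer _ (k+1) (T.acts _ (T.y0 x) k) i
    rw [GT.layer]
    congr 1
    · exact valD_descD T x k i
    · funext hh
      exact valD_descD T x k _

end Guhat

section Guhat2

open BFC

variable {σ : Type}

def bitIdx {n s : ℕ} (hs : 0 < s) (i : Fin n) (r : Fin s) : Fin (s * n) :=
  ⟨(i : ℕ) * s + r, by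
    have h1 : (i : ℕ) * s + (r : ℕ) < ((i : ℕ) + 1) * s := by
      have := r.2; nlinarith
    have h2 : ((i : ℕ) + 1) * s ≤ n * s := Nat.mul_le_mul_right _ i.2
    calc (i : ℕ) * s + (r : ℕ) < ((i : ℕ) + 1) * s := h1
      _ ≤ n * s := h2
      _ = s * n := Nat.mul_comm _ _⟩

theorem encodeInput_bitIdx {s : ℕ} (hs : 0 < s) (hsym : (σ ⊕ Unit) → Fin s → Bool)
    (x : List σ) (i : Fin (x.length + 1)) (r : Fin s) :
    encodeInput hs hsym x (bitIdx hs i r) = hsym (GT.inputSeq x i) r := by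
  have hrw : ((bitIdx hs i r : Fin (s * (x.length+1))) : ℕ) = (i : ℕ) * s + (r : ℕ) := rfl
  have hdiv : ((i : ℕ) * s + (r : ℕ)) / s = (i : ℕ) := by
    rw [show (i : ℕ) * s + (r : ℕ) = (r : ℕ) + (i : ℕ) * s by ring,
      Nat.add_mul_div_right _ _ hs, Nat.div_eq_of_lt r.2, Nat.zero_add]
  have hmod : ((i : ℕ) * s + (r : ℕ)) % s = (r : ℕ) := by
    rw [show (i : ℕ) * s + (r : ℕ) = (r : ℕ) + (i : ℕ) * s by ring,
      Nat.add_mul_mod_self_right, Nat.mod_eq_of_lt r.2]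
  unfold encodeInput
  congr 1
  · congr 1
    exact Fin.ext hdiv
  · exact Fin.ext hmod

def symEq {n s : ℕ} (hs : 0 < s) (hsym : (σ ⊕ Unit) → Fin s → Bool)
    (i : Fin n) (a : σ ⊕ Unit) : BF (s * n) :=
  .and ((List.finRange s).map fun r => .lit (bitIdx hs i r) (hsym a r))

theorem symEq_eval {s : ℕ} (hs : 0 < s) (hsym : (σ ⊕ Unit) → Fin s → Bool)
    (hinj : Function.Injective hsym) (x : List σ) (i : Fin (x.length + 1)) (a : σ ⊕ Unit) :
    BF.eval (encodeInput hs hsym x) (symEq hs hsym i a) = true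
      ↔ GT.inputSeq x i = a := by
  rw [symEq, BF.eval_and, List.all_eq_true]
  constructor
  · intro hall
    apply hinj
    funext r
    have := hall _ (List.mem_map.mpr ⟨r, List.mem_finRange r, rfl⟩)
    rw [BF.eval_lit, encodeInput_bitIdx hs hsym x i r] at this
    exact eq_of_beq this
  · intro heq φ hφ
    obtain ⟨r, _, rfl⟩ := List.mem_map.mp hφ
    rw [BF.eval_lit, encodeInput_bitIdx hs hsym x i r, heq]
    exact beq_self_eq_true _

open Classical in
/-- The formula asserting that `d` is the actual description of the computation
at its root position. -/
noncomputable def phiD [Fintype σ] (T : GT σ) {s : ℕ} (hs : 0 < s)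
    (hsym : (σ ⊕ Unit) → Fin s → Bool) (n : ℕ) :
    ∀ k, Dk (σ ⊕ Unit) T.H n k → BF (s * n)
  | 0, d => symEq hs hsym d.1 d.2
  | k+1, d => .and (
      phiD T hs hsym n k d.1 ::
      (List.finRange T.H).flatMap (fun hh =>
        phiD T hs hsym n k (d.2 hh) ::
        (List.finRange n).map (fun j =>
          .or ((Finset.univ : Finset (Dk (σ ⊕ Unit) T.H n k)).toList.map (fun e =>
            .and [phiD T hs hsym n k e,
              .const (decide (rootD k e = j ∧
                T.fatt (k+1) (hh.val.succ) (valD T n k d.1) (valD T n k e)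
                  ≤ T.fatt (k+1) (hh.val.succ) (valD T n k d.1) (valD T n k (d.2 hh))
                ∧ (j < rootD k (d.2 hh) →
                  T.fatt (k+1) (hh.val.succ) (valD T n k d.1) (valD T n k e)
                    < T.fatt (k+1) (hh.val.succ) (valD T n k d.1)
                      (valD T n k (d.2 hh)))))])))))

theorem phiD_iff [Fintype σ] (T : GT σ) {s : ℕ} (hs : 0 < s)
    (hsym : (σ ⊕ Unit) → Fin s → Bool) (hinj : Function.Injective hsym) (x : List σ) :
    ∀ k (d : Dk (σ ⊕ Unit) T.H (x.length + 1) k),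
      BF.eval (encodeInput hs hsym x) (phiD T hs hsym (x.length + 1) k d) = true
        ↔ d = descD T x k (rootD k d) := by
  intro k
  induction k with
  | zero =>
    intro d
    rw [show phiD T hs hsym (x.length + 1) 0 d = symEq hs hsym d.1 d.2 from rfl]
    rw [symEq_eval hs hsym hinj]
    constructor
    · intro he
      exact Prod.ext rfl he.symm
    · intro he
      have : d.2 = (descD T x 0 (rootD 0 d)).2 := by rw [← he]
      exact this.symm
  | succ k IH =>
    intro d
    set A := T.acts (Nat.succ_pos x.length) (T.y0 x) with hA
    rw [show phiD T hs hsym (x.length+1) (k+1) d = .and (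
      phiD T hs hsym (x.length+1) k d.1 ::
      (List.finRange T.H).flatMap (fun hh =>
        phiD T hs hsym (x.length+1) k (d.2 hh) ::
        (List.finRange (x.length+1)).map (fun j =>
          .or ((Finset.univ : Finset (Dk (σ ⊕ Unit) T.H (x.length+1) k)).toList.map (fun e =>
            .and [phiD T hs hsym (x.length+1) k e,
              .const (decide (rootD k e = j ∧
                T.fatt (k+1) (hh.val.succ) (valD T (x.length+1) k d.1) (valD T (x.length+1) k e)
                  ≤ T.fatt (k+1) (hh.val.succ) (valD T (x.length+1) k d.1) (valD T (x.length+1) k (d.2 hh))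
                ∧ (j < rootD k (d.2 hh) →
                  T.fatt (k+1) (hh.val.succ) (valD T (x.length+1) k d.1) (valD T (x.length+1) k e)
                    < T.fatt (k+1) (hh.val.succ) (valD T (x.length+1) k d.1)
                      (valD T (x.length+1) k (d.2 hh)))))]))))) from rfl]
    rw [BF.eval_and, List.all_eq_true]
    constructor
    · intro hall
      have h1 : d.1 = descD T x k (rootD k d.1) :=
        (IH d.1).mp (hall _ (List.mem_cons_self))
      have hsc : ∀ hh : Fin T.H, ∀ j : Fin (x.length+1),
          T.fatt (k+1) (hh.val.succ) (A k (rootD k d.1)) (A k j)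
            ≤ T.fatt (k+1) (hh.val.succ) (A k (rootD k d.1)) (A k (rootD k (d.2 hh)))
          ∧ (j < rootD k (d.2 hh) →
            T.fatt (k+1) (hh.val.succ) (A k (rootD k d.1)) (A k j)
              < T.fatt (k+1) (hh.val.succ) (A k (rootD k d.1)) (A k (rootD k (d.2 hh)))) := by
        intro hh j
        have hor := hall (.or ((Finset.univ : Finset (Dk (σ ⊕ Unit) T.H (x.length+1) k)).toList.map (fun e =>
            .and [phiD T hs hsym (x.length+1) k e,
              .const (decide (rootD k e = j ∧
                T.fatt (k+1) (hh.val.succ) (valD T (x.length+1) k d.1) (valD T (x.length+1) k e)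
                  ≤ T.fatt (k+1) (hh.val.succ) (valD T (x.length+1) k d.1) (valD T (x.length+1) k (d.2 hh))
                ∧ (j < rootD k (d.2 hh) →
                  T.fatt (k+1) (hh.val.succ) (valD T (x.length+1) k d.1) (valD T (x.length+1) k e)
                    < T.fatt (k+1) (hh.val.succ) (valD T (x.length+1) k d.1)
                      (valD T (x.length+1) k (d.2 hh)))))]))) (by
          refine List.mem_cons_of_mem _ (List.mem_flatMap.mpr ⟨hh, List.mem_finRange hh, ?_⟩)
          exact List.mem_cons_of_mem _ (List.mem_map.mpr ⟨j, List.mem_finRange j, rfl⟩))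
        rw [BF.eval_or, List.any_eq_true] at hor
        obtain ⟨ψ, hψ, hev⟩ := hor
        obtain ⟨e, _, rfl⟩ := List.mem_map.mp hψ
        rw [BF.eval_and, List.all_eq_true] at hev
        have he1 : e = descD T x k (rootD k e) :=
          (IH e).mp (hev _ (by simp))
        have he2 := hev _ (List.mem_cons_of_mem _ (List.mem_cons_self))
        rw [BF.eval_const, decide_eq_true_iff] at he2
        obtain ⟨hroot, hle, hlt⟩ := he2
        have hve : valD T (x.length+1) k e = A k j := by
          rw [he1, hroot, hA]
          exact valD_descD T x k j
        have hv1 : valD T (x.length+1) k d.1 = A k (rootD k d.1) := by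
          rw [h1, hA]
          have := valD_descD T x k (rootD k d.1)
          rw [← h1] at this ⊢
          rw [h1] at this ⊢
          exact this
        have hvh : valD T (x.length+1) k (d.2 hh) = A k (rootD k (d.2 hh)) := by
          have hg : d.2 hh = descD T x k (rootD k (d.2 hh)) :=
            (IH _).mp (hall _ (List.mem_cons_of_mem _ (List.mem_flatMap.mpr
              ⟨hh, List.mem_finRange hh, List.mem_cons_self⟩)))
          conv_lhs => rw [hg]
          rw [hA]
          exact valD_descD T x k _
        rw [hve, hv1, hvh] at hle hlt
        exact ⟨hle, hlt⟩
      have hgoal : ∀ hh : Fin T.H, d.2 hh = descD T x k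
          (leftmostArgmax (Nat.succ_pos x.length) (fun j => T.fatt (k+1) (hh.val.succ)
            (A k (rootD k d.1)) (A k j))) := by
        intro hh
        have hg : d.2 hh = descD T x k (rootD k (d.2 hh)) :=
          (IH _).mp (hall _ (List.mem_cons_of_mem _ (List.mem_flatMap.mpr
            ⟨hh, List.mem_finRange hh, List.mem_cons_self⟩)))
        have harg : leftmostArgmax (Nat.succ_pos x.length) (fun j => T.fatt (k+1) (hh.val.succ)
            (A k (rootD k d.1)) (A k j)) = rootD k (d.2 hh) :=
          leftmostArgmax_eq (Nat.succ_pos x.length) _ (fun l => (hsc hh l).1) (fun j hj => (hsc hh j).2 hj)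
        rw [harg]
        exact hg
      show d = descD T x (k+1) (rootD k d.1)
      have : descD T x (k+1) (rootD k d.1) = (descD T x k (rootD k d.1),
          fun hh => descD T x k (leftmostArgmax (Nat.succ_pos x.length) (fun j => T.fatt (k+1) (hh.val.succ)
            (A k (rootD k d.1)) (A k j)))) := rfl
      rw [this]
      exact Prod.ext h1 (funext hgoal)
    · intro hd φ hφ
      have hd1 : d.1 = descD T x k (rootD k d.1) := by
        have : d.1 = descD T x k (rootD k d.1) := congrArg Prod.fst hd
        exact this
      have hv1 : valD T (x.length+1) k d.1 = A k (rootD k d.1) := by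
        conv_lhs => rw [hd1]
        rw [hA]
        exact valD_descD T x k _
      have hd2 : ∀ hh : Fin T.H, d.2 hh = descD T x k
          (leftmostArgmax (Nat.succ_pos x.length) (fun j => T.fatt (k+1) (hh.val.succ)
            (A k (rootD k d.1)) (A k j))) := by
        intro hh
        exact congrFun (congrArg Prod.snd hd) hh
      rcases List.mem_cons.mp hφ with rfl | hφ
      · exact (IH d.1).mpr hd1
      obtain ⟨hh, _, hφ⟩ := List.mem_flatMap.mp hφ
      rcases List.mem_cons.mp hφ with rfl | hφ
      · refine (IH _).mpr ?_
        rw [hd2 hh, rootD_descD]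
      obtain ⟨j, _, rfl⟩ := List.mem_map.mp hφ
      rw [BF.eval_or, List.any_eq_true]
      refine ⟨_, List.mem_map.mpr ⟨descD T x k j, Finset.mem_toList.mpr (Finset.mem_univ _),
        rfl⟩, ?_⟩
      rw [BF.eval_and, List.all_eq_true]
      intro ψ hψ
      have hroote : rootD k (descD T x k j) = j := rootD_descD T x k j
      have hve : valD T (x.length+1) k (descD T x k j) = A k j := by rw [hA]; exact valD_descD T x k j
      have hvh : valD T (x.length+1) k (d.2 hh) = A k (leftmostArgmax (Nat.succ_pos x.length)
          (fun j => T.fatt (k+1) (hh.val.succ) (A k (rootD k d.1)) (A k j))) := by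
        conv_lhs => rw [hd2 hh]
        rw [hA]
        exact valD_descD T x k _
      rcases List.mem_cons.mp hψ with rfl | hψ
      · refine (IH _).mpr ?_
        rw [hroote]
      rcases List.mem_cons.mp hψ with rfl | hψ
      · rw [BF.eval_const, decide_eq_true_iff]
        refine ⟨hroote, ?_, ?_⟩
        · rw [hve, hv1, hvh]
          exact leftmostArgmax_mem (Nat.succ_pos x.length)
            (fun j => T.fatt (k+1) (hh.val.succ) (A k (rootD k d.1)) (A k j)) j
        · rw [hve, hv1, hvh, show rootD k (d.2 hh) = leftmostArgmax (Nat.succ_pos x.length)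
            (fun j => T.fatt (k+1) (hh.val.succ) (A k (rootD k d.1)) (A k j)) by
              rw [hd2 hh, rootD_descD]]
          intro hj
          exact leftmostArgmax_lt (Nat.succ_pos x.length)
            (fun j => T.fatt (k+1) (hh.val.succ) (A k (rootD k d.1)) (A k j)) hj
      · simp at hψ

end Guhat2

section Guhat3

open BFC

variable {σ : Type}

open Classical in
/-- The output formula: some accepting description of the last position is actual. -/
noncomputable def topBF [Fintype σ] (T : GT σ) {s : ℕ} (hs : 0 < s)
    (hsym : (σ ⊕ Unit) → Fin s → Bool) : (n : ℕ) → BF (s * n)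
  | 0 => .const false
  | m+1 => .or ((Finset.univ : Finset (Dk (σ ⊕ Unit) T.H (m+1) T.K)).toList.map (fun d =>
      .and [phiD T hs hsym (m+1) T.K d,
        .const (decide (rootD T.K d = (⟨m, Nat.lt_succ_self m⟩ : Fin (m+1))
          ∧ T.g (valD T (m+1) T.K d) = true))]))

theorem topBF_iff [Fintype σ] (T : GT σ) {s : ℕ} (hs : 0 < s)
    (hsym : (σ ⊕ Unit) → Fin s → Bool) (hinj : Function.Injective hsym) (x : List σ) :
    (BF.eval (encodeInput hs hsym x) (topBF T hs hsym (x.length + 1)) = true)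
      ↔ x ∈ T.lang := by
  rw [show topBF T hs hsym (x.length + 1)
    = .or ((Finset.univ : Finset (Dk (σ ⊕ Unit) T.H (x.length+1) T.K)).toList.map (fun d =>
      .and [phiD T hs hsym (x.length+1) T.K d,
        .const (decide (rootD T.K d = (⟨x.length, Nat.lt_succ_self _⟩ : Fin (x.length+1))
          ∧ T.g (valD T (x.length+1) T.K d) = true))])) from rfl]
  rw [BF.eval_or, List.any_eq_true]
  constructor
  · rintro ⟨ψ, hψ, hev⟩
    obtain ⟨dd, _, rfl⟩ := List.mem_map.mp hψ
    rw [BF.eval_and, List.all_eq_true] at hev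
    have h1 := (phiD_iff T hs hsym hinj x T.K dd).mp (hev _ (List.mem_cons_self))
    have h2 := hev _ (List.mem_cons_of_mem _ (List.mem_cons_self))
    rw [BF.eval_const, decide_eq_true_iff] at h2
    obtain ⟨hroot, hacc⟩ := h2
    show T.accepts x
    have hdd : dd = descD T x T.K ⟨x.length, Nat.lt_succ_self _⟩ := by rw [h1, hroot]
    have hv : valD T (x.length+1) T.K dd
        = T.acts (Nat.succ_pos _) (T.y0 x) T.K ⟨x.length, Nat.lt_succ_self _⟩ := by
      rw [hdd]
      exact valD_descD T x T.K _
    show T.g _ = true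
    rw [← hv]
    exact hacc
  · intro hx
    refine ⟨_, List.mem_map.mpr ⟨descD T x T.K ⟨x.length, Nat.lt_succ_self _⟩,
      Finset.mem_toList.mpr (Finset.mem_univ _), rfl⟩, ?_⟩
    rw [BF.eval_and, List.all_eq_true]
    intro ψ hψ
    rcases List.mem_cons.mp hψ with rfl | hψ
    · refine (phiD_iff T hs hsym hinj x T.K _).mpr ?_
      rw [rootD_descD]
    rcases List.mem_cons.mp hψ with rfl | hψ
    · rw [BF.eval_const, decide_eq_true_iff]
      refine ⟨rootD_descD T x T.K _, ?_⟩
      rw [valD_descD T x T.K _]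
      exact hx
    · simp at hψ

theorem depth_lit {n : ℕ} (i : Fin n) (b : Bool) : BF.depth (.lit i b) = 1 := by
  rw [BF.depth]

theorem depth_const {n : ℕ} (b : Bool) : BF.depth (.const b : BF n) = 1 := by
  rw [BF.depth]

theorem phiD_depth [Fintype σ] (T : GT σ) {s : ℕ} (hs : 0 < s)
    (hsym : (σ ⊕ Unit) → Fin s → Bool) (n : ℕ) :
    ∀ k (d : Dk (σ ⊕ Unit) T.H n k),
      BF.depth (phiD T hs hsym n k d) ≤ 3 * k + 2 := by
  intro k
  induction k with
  | zero =>
    intro d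
    show BF.depth (.and ((List.finRange s).map fun r => .lit (bitIdx hs d.1 r) (hsym d.2 r))) ≤ 2
    refine BF.depth_and_le _ 1 ?_
    intro φ hφ
    obtain ⟨r, _, rfl⟩ := List.mem_map.mp hφ
    rw [depth_lit]
  | succ k IH =>
    intro d
    refine BF.depth_and_le _ (3 * k + 4) ?_
    intro φ hφ
    rcases List.mem_cons.mp hφ with rfl | hφ
    · exact le_trans (IH d.1) (by omega)
    obtain ⟨hh, _, hφ⟩ := List.mem_flatMap.mp hφ
    rcases List.mem_cons.mp hφ with rfl | hφ
    · exact le_trans (IH (d.2 hh)) (by omega)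
    obtain ⟨j, _, rfl⟩ := List.mem_map.mp hφ
    refine BF.depth_or_le _ (3 * k + 3) ?_
    intro ψ hψ
    obtain ⟨e, _, rfl⟩ := List.mem_map.mp hψ
    refine BF.depth_and_le _ (3 * k + 2) ?_
    intro χ hχ
    rcases List.mem_cons.mp hχ with rfl | hχ
    · exact IH e
    rcases List.mem_cons.mp hχ with rfl | hχ
    · rw [depth_const]; omega
    · simp at hχ

theorem topBF_depth [Fintype σ] (T : GT σ) {s : ℕ} (hs : 0 < s)
    (hsym : (σ ⊕ Unit) → Fin s → Bool) (n : ℕ) :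
    BF.depth (topBF T hs hsym n) ≤ 3 * T.K + 4 := by
  match n with
  | 0 =>
    rw [show topBF T hs hsym 0 = .const false from rfl, depth_const]
    omega
  | m+1 =>
    refine BF.depth_or_le _ (3 * T.K + 3) ?_
    intro ψ hψ
    obtain ⟨e, _, rfl⟩ := List.mem_map.mp hψ
    refine BF.depth_and_le _ (3 * T.K + 2) ?_
    intro χ hχ
    rcases List.mem_cons.mp hχ with rfl | hχ
    · exact phiD_depth T hs hsym (m+1) T.K e
    rcases List.mem_cons.mp hχ with rfl | hχ
    · rw [depth_const]; omega
    · simp at hχ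

end Guhat3

section Guhat4

open BFC

variable {σ : Type}

theorem card_Dk (σ' : Type) [Fintype σ'] (H n : ℕ) :
    ∀ k, Fintype.card (Dk σ' H n k) ≤ ((Fintype.card σ') * (n+1)) ^ ((H+1)^k) := by
  intro k
  induction k with
  | zero =>
    have h0 : Fintype.card (Dk σ' H n 0) = n * Fintype.card σ' := by
      rw [show Fintype.card (Dk σ' H n 0) = Fintype.card (Fin n × σ') from
        Fintype.card_congr (Equiv.cast rfl)]
      simp
    rw [h0, pow_zero, pow_one, Nat.mul_comm]
    exact Nat.mul_le_mul_left _ (Nat.le_succ n)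
  | succ k IH =>
    have hcard : Fintype.card (Dk σ' H n (k+1))
        = Fintype.card (Dk σ' H n k) * Fintype.card (Dk σ' H n k) ^ H := by
      rw [show Fintype.card (Dk σ' H n (k+1))
        = Fintype.card (Dk σ' H n k × (Fin H → Dk σ' H n k)) from
        Fintype.card_congr (Equiv.cast rfl)]
      simp [Fintype.card_fun]
    rw [hcard, ← pow_succ']
    calc Fintype.card (Dk σ' H n k) ^ (H+1)
        ≤ (((Fintype.card σ') * (n+1)) ^ ((H+1)^k)) ^ (H+1) := Nat.pow_le_pow_left IH _
      _ = ((Fintype.card σ') * (n+1)) ^ ((H+1)^k * (H+1)) := by rw [← pow_mul]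
      _ = ((Fintype.card σ') * (n+1)) ^ ((H+1)^(k+1)) := by rw [pow_succ]

theorem wires_lit {n : ℕ} (i : Fin n) (b : Bool) : BF.wires (.lit i b) ≤ 1 := by
  rw [BF.wires]; cases b <;> simp

theorem wires_const {n : ℕ} (b : Bool) : BF.wires (.const b : BF n) = 0 := by
  rw [BF.wires]

/-- Recursive wire-count bound for `phiD`. -/
def Wb (s H a : ℕ) (n : ℕ) : ℕ → ℕ
  | 0 => 2 * s
  | k+1 => (1 + H * (1 + n)) *
      ((a * (n+1))^((H+1)^k) * (2 * (Wb s H a n k + 1) + 1) + Wb s H a n k + 1)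

theorem phiD_wires [Fintype σ] (T : GT σ) {s : ℕ} (hs : 0 < s)
    (hsym : (σ ⊕ Unit) → Fin s → Bool) (n : ℕ) :
    ∀ k (d : Dk (σ ⊕ Unit) T.H n k),
      BF.wires (phiD T hs hsym n k d) ≤ Wb s T.H (Fintype.card σ + 1) n k := by
  have hcard : Fintype.card (σ ⊕ Unit) = Fintype.card σ + 1 := by simp
  intro k
  induction k with
  | zero =>
    intro d
    show BF.wires (.and ((List.finRange s).map fun r => .lit (bitIdx hs d.1 r) (hsym d.2 r)))
      ≤ 2 * s
    have := BF.wires_and_le ((List.finRange s).map fun r => .lit (bitIdx hs d.1 r) (hsym d.2 r))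
      1 (by
        intro φ hφ
        obtain ⟨r, _, rfl⟩ := List.mem_map.mp hφ
        exact wires_lit _ _)
    simp only [List.length_map, List.length_finRange] at this
    omega
  | succ k IH =>
    intro d
    set a := Fintype.card σ + 1
    set W := Wb s T.H a n k with hW
    set ck := (a * (n+1))^((T.H+1)^k) with hck
    have hL : ((Finset.univ : Finset (Dk (σ ⊕ Unit) T.H n k)).toList).length ≤ ck := by
      rw [Finset.length_toList]
      have := card_Dk (σ ⊕ Unit) T.H n k
      rw [hcard] at this
      exact this
    have hinner : ∀ j : Fin n, ∀ hh : Fin T.H,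
        BF.wires (.or ((Finset.univ : Finset (Dk (σ ⊕ Unit) T.H n k)).toList.map (fun e =>
          .and [phiD T hs hsym n k e,
            .const (decide (rootD k e = j ∧
              T.fatt (k+1) (hh.val.succ) (valD T n k d.1) (valD T n k e)
                ≤ T.fatt (k+1) (hh.val.succ) (valD T n k d.1) (valD T n k (d.2 hh))
              ∧ (j < rootD k (d.2 hh) →
                T.fatt (k+1) (hh.val.succ) (valD T n k d.1) (valD T n k e)
                  < T.fatt (k+1) (hh.val.succ) (valD T n k d.1)
                    (valD T n k (d.2 hh)))))]))) ≤ ck * (2 * (W + 1) + 1) := by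
      intro j hh
      have hor := BF.wires_or_le ((Finset.univ : Finset (Dk (σ ⊕ Unit) T.H n k)).toList.map
        (fun e => (.and [phiD T hs hsym n k e,
            .const (decide (rootD k e = j ∧
              T.fatt (k+1) (hh.val.succ) (valD T n k d.1) (valD T n k e)
                ≤ T.fatt (k+1) (hh.val.succ) (valD T n k d.1) (valD T n k (d.2 hh))
              ∧ (j < rootD k (d.2 hh) →
                T.fatt (k+1) (hh.val.succ) (valD T n k d.1) (valD T n k e)
                  < T.fatt (k+1) (hh.val.succ) (valD T n k d.1)
                    (valD T n k (d.2 hh)))))] : BF (s*n))))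
        (2 * (W + 1)) (by
          intro ψ hψ
          obtain ⟨e, _, rfl⟩ := List.mem_map.mp hψ
          have := BF.wires_and_le [phiD T hs hsym n k e,
            .const (decide (rootD k e = j ∧
              T.fatt (k+1) (hh.val.succ) (valD T n k d.1) (valD T n k e)
                ≤ T.fatt (k+1) (hh.val.succ) (valD T n k d.1) (valD T n k (d.2 hh))
              ∧ (j < rootD k (d.2 hh) →
                T.fatt (k+1) (hh.val.succ) (valD T n k d.1) (valD T n k e)
                  < T.fatt (k+1) (hh.val.succ) (valD T n k d.1)
                    (valD T n k (d.2 hh)))))] W (by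
              intro χ hχ
              rcases List.mem_cons.mp hχ with rfl | hχ
              · exact IH e
              rcases List.mem_cons.mp hχ with rfl | hχ
              · rw [wires_const]; omega
              · simp at hχ)
          simpa using this)
      refine le_trans hor ?_
      rw [List.length_map]
      exact Nat.mul_le_mul_right _ hL
    have hlen : (phiD T hs hsym n k d.1 ::
        (List.finRange T.H).flatMap (fun hh =>
          phiD T hs hsym n k (d.2 hh) ::
          (List.finRange n).map (fun j =>
            (.or ((Finset.univ : Finset (Dk (σ ⊕ Unit) T.H n k)).toList.map (fun e =>
              .and [phiD T hs hsym n k e,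
                .const (decide (rootD k e = j ∧
                  T.fatt (k+1) (hh.val.succ) (valD T n k d.1) (valD T n k e)
                    ≤ T.fatt (k+1) (hh.val.succ) (valD T n k d.1) (valD T n k (d.2 hh))
                  ∧ (j < rootD k (d.2 hh) →
                    T.fatt (k+1) (hh.val.succ) (valD T n k d.1) (valD T n k e)
                      < T.fatt (k+1) (hh.val.succ) (valD T n k d.1)
                        (valD T n k (d.2 hh)))))])) : BF (s*n))))).length
        = 1 + T.H * (1 + n) := by
      rw [List.length_cons, List.length_flatMap]
      simp only [Function.comp_def, List.length_cons, List.length_map, List.length_finRange]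
      rw [List.map_const', List.sum_replicate, List.length_finRange, smul_eq_mul]
      ring
    have hmain := BF.wires_and_le (phiD T hs hsym n k d.1 ::
        (List.finRange T.H).flatMap (fun hh =>
          phiD T hs hsym n k (d.2 hh) ::
          (List.finRange n).map (fun j =>
            (.or ((Finset.univ : Finset (Dk (σ ⊕ Unit) T.H n k)).toList.map (fun e =>
              .and [phiD T hs hsym n k e,
                .const (decide (rootD k e = j ∧
                  T.fatt (k+1) (hh.val.succ) (valD T n k d.1) (valD T n k e)
                    ≤ T.fatt (k+1) (hh.val.succ) (valD T n k d.1) (valD T n k (d.2 hh))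
                  ∧ (j < rootD k (d.2 hh) →
                    T.fatt (k+1) (hh.val.succ) (valD T n k d.1) (valD T n k e)
                      < T.fatt (k+1) (hh.val.succ) (valD T n k d.1)
                        (valD T n k (d.2 hh)))))])) : BF (s*n))))) (ck * (2 * (W + 1) + 1) + W) (by
      intro φ hφ
      rcases List.mem_cons.mp hφ with rfl | hφ
      · exact le_trans (IH d.1) (by omega)
      obtain ⟨hh, _, hφ⟩ := List.mem_flatMap.mp hφ
      rcases List.mem_cons.mp hφ with rfl | hφ
      · exact le_trans (IH (d.2 hh)) (by omega)
      obtain ⟨j, _, rfl⟩ := List.mem_map.mp hφ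
      exact le_trans (hinner j hh) (by omega))
    refine le_trans hmain ?_
    rw [hlen]
    show (1 + T.H * (1 + n)) * (ck * (2 * (W + 1) + 1) + W + 1)
      ≤ (1 + T.H * (1 + n)) * ((a * (n+1))^((T.H+1)^k) * (2 * (W + 1) + 1) + W + 1)
    rw [← hck]

theorem topBF_wires [Fintype σ] (T : GT σ) {s : ℕ} (hs : 0 < s)
    (hsym : (σ ⊕ Unit) → Fin s → Bool) (n : ℕ) :
    BF.wires (topBF T hs hsym n)
      ≤ ((Fintype.card σ + 1) * (n+1))^((T.H+1)^T.K)
          * (2 * (Wb s T.H (Fintype.card σ + 1) n T.K + 1) + 1) := by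
  have hcard : Fintype.card (σ ⊕ Unit) = Fintype.card σ + 1 := by simp
  match n with
  | 0 =>
    rw [show topBF T hs hsym 0 = .const false from rfl, wires_const]
    exact Nat.zero_le _
  | m+1 =>
    have hor := BF.wires_or_le ((Finset.univ : Finset (Dk (σ ⊕ Unit) T.H (m+1) T.K)).toList.map
      (fun d => (.and [phiD T hs hsym (m+1) T.K d,
        .const (decide (rootD T.K d = (⟨m, Nat.lt_succ_self m⟩ : Fin (m+1))
          ∧ T.g (valD T (m+1) T.K d) = true))] : BF (s*(m+1)))))
      (2 * (Wb s T.H (Fintype.card σ + 1) (m+1) T.K + 1)) (by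
        intro ψ hψ
        obtain ⟨e, _, rfl⟩ := List.mem_map.mp hψ
        have := BF.wires_and_le [phiD T hs hsym (m+1) T.K e,
          .const (decide (rootD T.K e = (⟨m, Nat.lt_succ_self m⟩ : Fin (m+1))
            ∧ T.g (valD T (m+1) T.K e) = true))]
          (Wb s T.H (Fintype.card σ + 1) (m+1) T.K) (by
            intro χ hχ
            rcases List.mem_cons.mp hχ with rfl | hχ
            · exact phiD_wires T hs hsym (m+1) T.K e
            rcases List.mem_cons.mp hχ with rfl | hχ
            · rw [wires_const]; omega
            · simp at hχ)
        simpa using this)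
    refine le_trans hor ?_
    rw [List.length_map, Finset.length_toList]
    refine Nat.mul_le_mul_right _ ?_
    have := card_Dk (σ ⊕ Unit) T.H (m+1) T.K
    rw [hcard] at this
    exact this

end Guhat4

section Guhat5

open BFC

variable {σ : Type}

/-- Polynomially bounded functions. -/
def PolyB (f : ℕ → ℕ) : Prop := ∃ C E, ∀ n, f n ≤ C * (n+1)^E

theorem PolyB.const (c : ℕ) : PolyB (fun _ => c) :=
  ⟨c, 0, fun n => by simp⟩

theorem PolyB.succ : PolyB (fun n => n + 1) :=
  ⟨1, 1, fun n => by simp⟩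

theorem PolyB.mono {f g : ℕ → ℕ} (h : ∀ n, f n ≤ g n) (hg : PolyB g) : PolyB f := by
  obtain ⟨C, E, hC⟩ := hg
  exact ⟨C, E, fun n => le_trans (h n) (hC n)⟩

theorem PolyB.add {f g : ℕ → ℕ} (hf : PolyB f) (hg : PolyB g) :
    PolyB (fun n => f n + g n) := by
  obtain ⟨C1, E1, h1⟩ := hf
  obtain ⟨C2, E2, h2⟩ := hg
  refine ⟨C1 + C2, E1 + E2, fun n => ?_⟩
  have p1 : (n+1)^E1 ≤ (n+1)^(E1+E2) := Nat.pow_le_pow_right (Nat.succ_pos n) (by omega)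
  have p2 : (n+1)^E2 ≤ (n+1)^(E1+E2) := Nat.pow_le_pow_right (Nat.succ_pos n) (by omega)
  have := h1 n
  have := h2 n
  calc f n + g n ≤ C1 * (n+1)^(E1+E2) + C2 * (n+1)^(E1+E2) := by
        have := Nat.mul_le_mul_left C1 p1
        have := Nat.mul_le_mul_left C2 p2
        omega
    _ = (C1 + C2) * (n+1)^(E1+E2) := by ring

theorem PolyB.mul {f g : ℕ → ℕ} (hf : PolyB f) (hg : PolyB g) :
    PolyB (fun n => f n * g n) := by
  obtain ⟨C1, E1, h1⟩ := hf
  obtain ⟨C2, E2, h2⟩ := hg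
  refine ⟨C1 * C2, E1 + E2, fun n => ?_⟩
  calc f n * g n ≤ (C1 * (n+1)^E1) * (C2 * (n+1)^E2) := Nat.mul_le_mul (h1 n) (h2 n)
    _ = (C1 * C2) * (n+1)^(E1+E2) := by rw [pow_add]; ring

theorem PolyB.powterm (a m : ℕ) : PolyB (fun n => (a * (n+1))^m) :=
  ⟨a^m, m, fun n => le_of_eq (mul_pow a (n+1) m)⟩

theorem Wb_poly (s H a : ℕ) : ∀ k, PolyB (fun n => Wb s H a n k) := by
  intro k
  induction k with
  | zero => exact PolyB.const (2*s)
  | succ k IH =>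
    show PolyB (fun n => (1 + H * (1 + n)) *
      ((a * (n+1))^((H+1)^k) * (2 * (Wb s H a n k + 1) + 1) + Wb s H a n k + 1))
    refine PolyB.mul ?_ ?_
    · refine PolyB.mono (g := fun n => 1 + H * (1 + n)) (fun n => le_refl _) ?_
      refine PolyB.add (PolyB.const 1) (PolyB.mul (PolyB.const H) ?_)
      exact PolyB.mono (fun n => by omega) PolyB.succ
    · refine PolyB.add (PolyB.add (PolyB.mul (PolyB.powterm a ((H+1)^k)) ?_) IH)
        (PolyB.const 1)
      refine PolyB.add (PolyB.mul (PolyB.const 2) (PolyB.add IH (PolyB.const 1)))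
        (PolyB.const 1)

theorem topBF_poly [Fintype σ] (T : GT σ) {s : ℕ} (hs : 0 < s)
    (hsym : (σ ⊕ Unit) → Fin s → Bool) :
    PolyB (fun n => BF.wires (topBF T hs hsym n)) := by
  refine PolyB.mono (g := fun n => ((Fintype.card σ + 1) * (n+1))^((T.H+1)^T.K)
      * (2 * (Wb s T.H (Fintype.card σ + 1) n T.K + 1) + 1))
    (fun n => topBF_wires T hs hsym n) ?_
  refine PolyB.mul (PolyB.powterm _ _) ?_
  exact PolyB.add (PolyB.mul (PolyB.const 2) (PolyB.add (Wb_poly _ _ _ _) (PolyB.const 1)))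
    (PolyB.const 1)

theorem final_bound (s : ℕ) (hs1 : 1 ≤ s) (C E : ℕ) :
    ∃ c, ∀ n, C * (n+1)^E ≤ (s*n)^c + c := by
  refine ⟨C * 2^E + 2*E + C + 1, fun n => ?_⟩
  have h2E : 1 ≤ 2^E := Nat.one_le_two_pow
  match n with
  | 0 =>
    have : C * 1 ≤ C * 2^E := Nat.mul_le_mul_left C h2E
    simp only [Nat.zero_add, one_pow]
    omega
  | 1 =>
    have : C * (1+1)^E = C * 2^E := rfl
    rw [this]
    omega
  | (m+2) =>
    have h2 : 2 ≤ m + 2 := by omega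
    have hb1 : (m+2+1)^E ≤ ((m+2)^2)^E := Nat.pow_le_pow_left (by nlinarith) E
    have hb2 : C ≤ (m+2)^C :=
      le_trans (Nat.le_of_lt (Nat.lt_two_pow_self (n := C))) (Nat.pow_le_pow_left h2 C)
    have hCE : C + 2*E ≤ C * 2^E + 2*E + C + 1 := by nlinarith
    calc C * (m+2+1)^E ≤ (m+2)^C * ((m+2)^2)^E := Nat.mul_le_mul hb2 hb1
      _ = (m+2)^(C + 2*E) := by rw [← pow_mul, ← pow_add]
      _ ≤ (m+2)^(C * 2^E + 2*E + C + 1) := Nat.pow_le_pow_right (by omega) hCE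
      _ ≤ (s*(m+2))^(C * 2^E + 2*E + C + 1) :=
          Nat.pow_le_pow_left (Nat.le_mul_of_pos_left _ hs1) _
      _ ≤ (s*(m+2))^(C * 2^E + 2*E + C + 1) + (C * 2^E + 2*E + C + 1) :=
          Nat.le_add_right _ _

theorem Circuit.DepthLE.mono' {n m : ℕ} {C : Circuit n m} {K K' : ℕ}
    (h : C.DepthLE K) (hK : K ≤ K') : C.DepthLE K' := by
  obtain ⟨lev, h1, h2, h3⟩ := h
  exact ⟨lev, h1, h2, fun o => le_trans (h3 o) hK⟩

end Guhat5


/-- Every language recognized by a generalized unique hard attention Transformer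
(GUHAT) is in `AC⁰`: for every GUHAT `T` over a finite alphabet `Σ`, with
`s = ⌈log₂(|Σ|+2)⌉` and any binary symbol encoding `h` of `Σ ∪ {$}`, there is a family
of Boolean circuits of constant depth and polynomial size whose member with `s·n`
inputs, on the encoding of `x$` (where `n = |x| + 1`), outputs `1` iff `x ∈ L(T)`. -/
theorem guhat_in_AC0 (σ : Type) [Fintype σ] (T : GT σ)
    (h : (σ ⊕ Unit) → Fin (Nat.clog 2 (Fintype.card σ + 2)) → Bool)
    (hinj : Function.Injective h) :
    ∃ C : (n : ℕ) → Circuit (Nat.clog 2 (Fintype.card σ + 2) * n) 1,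
      (∃ K, ∀ n, (C n).DepthLE K) ∧
      (∃ c, ∀ n, (C n).size ≤ (Nat.clog 2 (Fintype.card σ + 2) * n) ^ c + c) ∧
      (∀ (x : List σ) v,
        (C (x.length + 1)).Consistent (encodeInput (Nat.clog_pos one_lt_two (by omega)) h x) v →
          (v ((C (x.length + 1)).out 0) = true ↔ x ∈ T.lang)) := by
  have hs : 0 < Nat.clog 2 (Fintype.card σ + 2) := Nat.clog_pos one_lt_two (by omega)
  obtain ⟨C0, E0, hpoly⟩ := topBF_poly T hs h
  obtain ⟨c, hc⟩ := final_bound _ hs C0 E0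
  refine ⟨fun n => BFC.toCircuit (topBF T hs h n), ⟨3*T.K+4, fun n =>
    Circuit.DepthLE.mono' (BFC.toCircuit_depth _) (topBF_depth T hs h n)⟩,
    ⟨c, fun n => le_trans (BFC.toCircuit_size _) (le_trans (hpoly n) (hc n))⟩, ?_⟩
  intro x v hcons
  have := BFC.toCircuit_computes (topBF T hs h (x.length+1))
    (encodeInput hs h x) v hcons 0
  rw [this]
  exact topBF_iff T hs h hinj x
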